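/- Let A be a unital associative k-algebra and α, β ∈ k with α ≠ 0 and β ≠ 0. Then the linear map R(a⊗b) = α·ab⊗1 + β·1⊗ab − α·a⊗b satisfies the braid equation R¹² ∘ R²³ ∘ R¹² = R²³ ∘ R¹² ∘ R²³. -/

import Mathlib

open TensorProduct

noncomputable section

def tw (k V : Type*) [Field k] [AddCommGroup V] [Module k V] :
    V ⊗[k] V →ₗ[k] V ⊗[k] V := (TensorProduct.comm k V V).toLinearMap

def R12 {k V : Type*} [Field k] [AddCommGroup V] [Module k V]
    (R : V ⊗[k] V →ₗ[k] V ⊗[k] V) :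
    V ⊗[k] (V ⊗[k] V) →ₗ[k] V ⊗[k] (V ⊗[k] V) :=
  (TensorProduct.assoc k V V V).toLinearMap ∘ₗ TensorProduct.map R LinearMap.id ∘ₗ
    (TensorProduct.assoc k V V V).symm.toLinearMap

def R23 {k V : Type*} [Field k] [AddCommGroup V] [Module k V]
    (R : V ⊗[k] V →ₗ[k] V ⊗[k] V) :
    V ⊗[k] (V ⊗[k] V) →ₗ[k] V ⊗[k] (V ⊗[k] V) :=
  TensorProduct.map LinearMap.id R

def R13 {k V : Type*} [Field k] [AddCommGroup V] [Module k V]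
    (R : V ⊗[k] V →ₗ[k] V ⊗[k] V) :
    V ⊗[k] (V ⊗[k] V) →ₗ[k] V ⊗[k] (V ⊗[k] V) :=
  TensorProduct.map LinearMap.id (tw k V) ∘ₗ R12 R ∘ₗ TensorProduct.map LinearMap.id (tw k V)

set_option synthInstance.maxHeartbeats 400000
set_option maxHeartbeats 1000000

theorem braid_R_alpha_beta_alpha {k A : Type*} [Field k] [Ring A] [Algebra k A]
    (α β : k) (hα : α ≠ 0) (hβ : β ≠ 0)
    (R : A ⊗[k] A →ₗ[k] A ⊗[k] A)
    (hR : ∀ a b : A, R (a ⊗ₜ b) = α • (a * b) ⊗ₜ (1 : A) + β • (1 : A) ⊗ₜ (a * b) - α • a ⊗ₜ b) :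
    R12 R ∘ₗ R23 R ∘ₗ R12 R = R23 R ∘ₗ R12 R ∘ₗ R23 R := by
  have h12 : ∀ a b c : A, R12 R (a ⊗ₜ (b ⊗ₜ c)) =
      α • (a * b) ⊗ₜ ((1 : A) ⊗ₜ c) + β • (1 : A) ⊗ₜ ((a * b) ⊗ₜ c) - α • a ⊗ₜ (b ⊗ₜ c) := by
    intro a b c
    simp only [R12, LinearMap.coe_comp, Function.comp_apply, LinearEquiv.coe_coe,
      assoc_symm_tmul, map_tmul, hR, LinearMap.id_coe, id_eq, sub_tmul, add_tmul, smul_tmul',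
      map_sub, map_add, LinearEquiv.map_smul, assoc_tmul]
  have h23 : ∀ a b c : A, R23 R (a ⊗ₜ (b ⊗ₜ c)) =
      α • a ⊗ₜ ((b * c) ⊗ₜ (1 : A)) + β • a ⊗ₜ ((1 : A) ⊗ₜ (b * c)) - α • a ⊗ₜ (b ⊗ₜ c) := by
    intro a b c
    simp only [R23, map_tmul, hR, LinearMap.id_coe, id_eq, tmul_sub, tmul_add, tmul_smul]
  apply TensorProduct.ext
  ext a : 1
  apply TensorProduct.ext'
  intro b c
  simp only [LinearMap.compr₂_apply, LinearMap.compr₂ₛₗ_apply, TensorProduct.mk_apply, LinearMap.coe_comp,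
    Function.comp_apply, map_add, map_sub, map_smul, h12, h23, mul_one, one_mul, mul_assoc]
  module
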